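/- For every fixed d ≥ 1, sup over r ∈ [1,∞) of (2r)^{−d}((r+1)^{r+1}/(r−1)^{r−1})^{d/2} equals (e/2)^d, attained in the limit r → ∞. -/

import Mathlib

noncomputable section
open Filter

/-- The lower-bound function `r ↦ (2r)^{-d} ((r+1)^{r+1}/(r-1)^{r-1})^{d/2}`. -/
def lbFun (d : ℕ) (r : ℝ) : ℝ :=
  (2 * r) ^ (-(d : ℝ)) * (((r + 1) ^ (r + 1) / (r - 1) ^ (r - 1)) ^ ((d : ℝ) / 2))

lemma hasDerivAt_keyF {y : ℝ} (h1 : (1:ℝ) + y ≠ 0) (h2 : (1:ℝ) - y ≠ 0) :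
    HasDerivAt (fun y : ℝ => 2 * y - (1 + y) * Real.log (1 + y) + (1 - y) * Real.log (1 - y))
      (2 - (Real.log (1 + y) + 1) + (-(Real.log (1 - y)) - 1)) y := by
  have hA : HasDerivAt (fun y : ℝ => 1 + y) 1 y := (hasDerivAt_id y).const_add 1
  have hB : HasDerivAt (fun y : ℝ => 1 - y) (-1) y := by
    simpa using (hasDerivAt_id y).const_sub 1
  have hP : HasDerivAt (fun y : ℝ => (1 + y) * Real.log (1 + y))
      (1 * Real.log (1 + y) + (1 + y) * (1 / (1 + y))) y := hA.mul (hA.log h1)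
  have hQ : HasDerivAt (fun y : ℝ => (1 - y) * Real.log (1 - y))
      ((-1) * Real.log (1 - y) + (1 - y) * (-1 / (1 - y))) y := hB.mul (hB.log h2)
  have h2y : HasDerivAt (fun y : ℝ => 2 * y) 2 y := by
    simpa using (hasDerivAt_id y).const_mul (2 : ℝ)
  have := (h2y.sub hP).add hQ
  convert this using 1
  any_goals rfl
  rw [mul_one_div_cancel h1, mul_div_assoc', mul_neg_one, neg_div, div_self h2]
  ring

lemma keyIneq {x : ℝ} (hx0 : 0 ≤ x) (hx1 : x < 1) :
    (1 + x) * Real.log (1 + x) - (1 - x) * Real.log (1 - x) ≤ 2 * x := by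
  set F : ℝ → ℝ := fun y => 2 * y - (1 + y) * Real.log (1 + y) + (1 - y) * Real.log (1 - y)
    with hF
  have hd : ∀ y ∈ Set.Ico (0:ℝ) 1, (1:ℝ) + y ≠ 0 ∧ (1:ℝ) - y ≠ 0 := by
    rintro y ⟨hy0, hy1⟩
    constructor <;> nlinarith
  have hmono : MonotoneOn F (Set.Ico (0:ℝ) 1) := by
    apply monotoneOn_of_deriv_nonneg (convex_Ico 0 1)
    · intro y hy
      exact (hasDerivAt_keyF (hd y hy).1 (hd y hy).2).differentiableAt.continuousAt.continuousWithinAt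
    · intro y hy
      rw [interior_Ico] at hy
      exact (hasDerivAt_keyF (hd y ⟨le_of_lt hy.1, hy.2⟩).1
        (hd y ⟨le_of_lt hy.1, hy.2⟩).2).differentiableAt.differentiableWithinAt
    · intro y hy
      rw [interior_Ico] at hy
      obtain ⟨hy0, hy1⟩ := hy
      have h1 : (0:ℝ) < 1 + y := by linarith
      have h2 : (0:ℝ) < 1 - y := by linarith
      rw [(hasDerivAt_keyF h1.ne' h2.ne').deriv]
      have l1 : Real.log (1 + y) ≤ (1 + y) - 1 := Real.log_le_sub_one_of_pos h1
      have l2 : Real.log (1 - y) ≤ (1 - y) - 1 := Real.log_le_sub_one_of_pos h2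
      linarith
  have h0 : F 0 = 0 := by simp [hF]
  have hx : F 0 ≤ F x := hmono ⟨le_refl 0, by norm_num⟩ ⟨hx0, hx1⟩ hx0
  rw [h0] at hx
  simp only [hF] at hx
  linarith

lemma lbFun_eq (d : ℕ) {r : ℝ} (hr : 1 < r) :
    lbFun d r = Real.exp ((d : ℝ) *
      (((r + 1) * Real.log (r + 1) - (r - 1) * Real.log (r - 1)) / 2 - Real.log (2 * r))) := by
  have h2r : (0:ℝ) < 2 * r := by linarith
  have hp : (0:ℝ) < r + 1 := by linarith
  have hm : (0:ℝ) < r - 1 := by linarith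
  rw [lbFun, Real.rpow_def_of_pos h2r, Real.rpow_def_of_pos hp, Real.rpow_def_of_pos hm,
    ← Real.exp_sub, Real.rpow_def_of_pos (Real.exp_pos _), Real.log_exp, ← Real.exp_add]
  congr 1
  ring

lemma target_eq (d : ℕ) :
    (Real.exp 1 / 2) ^ (d : ℝ) = Real.exp ((d : ℝ) * (1 - Real.log 2)) := by
  rw [Real.rpow_def_of_pos (by positivity), Real.log_div (Real.exp_ne_zero 1) two_ne_zero,
    Real.log_exp]
  ring_nf

lemma lbFun_le (d : ℕ) {r : ℝ} (hr : 1 ≤ r) :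
    lbFun d r ≤ (Real.exp 1 / 2) ^ (d : ℝ) := by
  rcases eq_or_lt_of_le hr with h | h
  · subst h
    have : lbFun d 1 = 1 := by
      rw [lbFun]
      norm_num
      rw [show (4:ℝ) = 2 ^ (2:ℝ) by
        rw [show ((2:ℝ)) ^ (2:ℝ) = (2:ℝ)^(2:ℕ) by rw [← Real.rpow_natCast]; norm_num]; norm_num,
        ← Real.rpow_mul (by norm_num), show (2:ℝ) * ((d:ℝ) / 2) = d by ring, Real.rpow_natCast, inv_mul_cancel₀ (by positivity)]
    rw [this, Real.rpow_natCast]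
    apply one_le_pow₀
    have := Real.exp_one_gt_d9
    linarith
  · rw [lbFun_eq d h, target_eq d]
    rw [Real.exp_le_exp]
    apply mul_le_mul_of_nonneg_left _ (by positivity)
    have hr0 : (0:ℝ) < r := by linarith
    have hm : (0:ℝ) < r - 1 := by linarith
    have hx0 : (0:ℝ) ≤ 1 / r := by positivity
    have hx1 : 1 / r < 1 := by rw [div_lt_one hr0]; linarith
    have h := keyIneq hx0 hx1
    have e1 : Real.log (1 + 1 / r) = Real.log (r + 1) - Real.log r := by
      rw [show (1:ℝ) + 1 / r = (r + 1) / r by field_simp, Real.log_div (by positivity) hr0.ne']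
    have e2 : Real.log (1 - 1 / r) = Real.log (r - 1) - Real.log r := by
      rw [show (1:ℝ) - 1 / r = (r - 1) / r by field_simp, Real.log_div hm.ne' hr0.ne']
    rw [e1, e2] at h
    have h' := mul_le_mul_of_nonneg_left h hr0.le
    have hexp : r * ((1 + 1 / r) * (Real.log (r + 1) - Real.log r)
        - (1 - 1 / r) * (Real.log (r - 1) - Real.log r))
        = (r + 1) * Real.log (r + 1) - (r - 1) * Real.log (r - 1) - 2 * Real.log r := by
      field_simp
      ring
    have hexp2 : r * (2 * (1 / r)) = 2 := by field_simp
    rw [hexp, hexp2] at h'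
    have hlog2r : Real.log (2 * r) = Real.log 2 + Real.log r :=
      Real.log_mul two_ne_zero hr0.ne'
    rw [hlog2r]
    linarith

lemma lbFun_tendsto (d : ℕ) :
    Tendsto (lbFun d) atTop (nhds ((Real.exp 1 / 2) ^ (d : ℝ))) := by
  have t1 : Tendsto (fun r : ℝ => r * Real.log (1 + 1 / r)) atTop (nhds 1) :=
    Real.tendsto_mul_log_one_add_div_atTop 1
  have t2 : Tendsto (fun r : ℝ => r * Real.log (1 + (-1) / r)) atTop (nhds (-1)) :=
    Real.tendsto_mul_log_one_add_div_atTop (-1)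
  have hinv : Tendsto (fun r : ℝ => r⁻¹) atTop (nhds (0:ℝ)) := tendsto_inv_atTop_zero
  have hb1 : Tendsto (fun r : ℝ => (1:ℝ) + 1 / r) atTop (nhds 1) := by
    have := (tendsto_const_nhds (x := (1:ℝ)) (f := atTop)).add hinv
    simpa [one_div] using this
  have hb2 : Tendsto (fun r : ℝ => (1:ℝ) + (-1) / r) atTop (nhds 1) := by
    have := (tendsto_const_nhds (x := (1:ℝ)) (f := atTop)).add hinv.neg
    simpa [neg_div, one_div] using this
  have l1 : Tendsto (fun r : ℝ => Real.log (1 + 1 / r)) atTop (nhds 0) := by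
    have := (Real.continuousAt_log one_ne_zero).tendsto.comp hb1
    simpa [Function.comp_def] using this
  have l2 : Tendsto (fun r : ℝ => Real.log (1 + (-1) / r)) atTop (nhds 0) := by
    have := (Real.continuousAt_log one_ne_zero).tendsto.comp hb2
    simpa [Function.comp_def] using this
  have T : Tendsto (fun r : ℝ =>
      (r * Real.log (1 + 1 / r) + Real.log (1 + 1 / r))
        - (r * Real.log (1 + (-1) / r) - Real.log (1 + (-1) / r)))
      atTop (nhds ((1 + 0) - ((-1) - 0))) := (t1.add l1).sub (t2.sub l2)
  rw [show ((1:ℝ) + 0) - ((-1) - 0) = 2 by norm_num] at T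
  have tE : Tendsto (fun r : ℝ =>
      (r + 1) * Real.log (r + 1) - (r - 1) * Real.log (r - 1) - 2 * Real.log r)
      atTop (nhds 2) := by
    apply T.congr'
    filter_upwards [eventually_gt_atTop (1:ℝ)] with r hr
    have hr0 : (0:ℝ) < r := by linarith
    have hm : (0:ℝ) < r - 1 := by linarith
    have e1 : Real.log (1 + 1 / r) = Real.log (r + 1) - Real.log r := by
      rw [show (1:ℝ) + 1 / r = (r + 1) / r by field_simp, Real.log_div (by positivity) hr0.ne']
    have e2 : Real.log (1 + (-1) / r) = Real.log (r - 1) - Real.log r := by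
      rw [show (1:ℝ) + (-1) / r = (r - 1) / r by field_simp; ring, Real.log_div hm.ne' hr0.ne']
    rw [e1, e2]
    ring
  have tG : Tendsto (fun r : ℝ => (d : ℝ) *
      (((r + 1) * Real.log (r + 1) - (r - 1) * Real.log (r - 1)) / 2 - Real.log (2 * r)))
      atTop (nhds ((d : ℝ) * (1 - Real.log 2))) := by
    have base : Tendsto (fun r : ℝ =>
        ((r + 1) * Real.log (r + 1) - (r - 1) * Real.log (r - 1) - 2 * Real.log r) / 2
          - Real.log 2) atTop (nhds (2 / 2 - Real.log 2)) :=
      (tE.div_const 2).sub tendsto_const_nhds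
    norm_num at base
    have := base.const_mul (d : ℝ)
    apply this.congr'
    filter_upwards [eventually_gt_atTop (1:ℝ)] with r hr
    have hr0 : (0:ℝ) < r := by linarith
    rw [Real.log_mul two_ne_zero hr0.ne']
    ring
  have : Tendsto (fun r : ℝ => Real.exp ((d : ℝ) *
      (((r + 1) * Real.log (r + 1) - (r - 1) * Real.log (r - 1)) / 2 - Real.log (2 * r))))
      atTop (nhds (Real.exp ((d : ℝ) * (1 - Real.log 2)))) :=
    (Real.continuous_exp.tendsto _).comp tG
  rw [target_eq d]
  apply this.congr'
  filter_upwards [eventually_gt_atTop (1:ℝ)] with r hr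
  exact (lbFun_eq d hr).symm

/-- The supremum over `r ∈ [1,∞)` of the lower-bound function equals `(e/2)^d`,
attained in the limit `r → ∞`. -/
theorem stmt14 (d : ℕ) (hd : 1 ≤ d) :
    sSup (lbFun d '' Set.Ici (1 : ℝ)) = (Real.exp 1 / 2) ^ (d : ℝ) ∧
      Tendsto (lbFun d) atTop (nhds ((Real.exp 1 / 2) ^ (d : ℝ))) := by
  have hT := lbFun_tendsto d
  refine ⟨?_, hT⟩
  have hne : (lbFun d '' Set.Ici (1:ℝ)).Nonempty := ⟨lbFun d 1, 1, Set.self_mem_Ici, rfl⟩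
  have hlub : IsLUB (lbFun d '' Set.Ici (1:ℝ)) ((Real.exp 1 / 2) ^ (d : ℝ)) := by
    constructor
    · rintro y ⟨r, hr, rfl⟩
      exact lbFun_le d hr
    · intro b hb
      refine le_of_tendsto hT ?_
      filter_upwards [eventually_ge_atTop (1:ℝ)] with r hr
      exact hb ⟨r, hr, rfl⟩
  exact hlub.csSup_eq hne
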